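/- Every commutative Bezout ring of stable range 1 is an elementary divisor ring. -/

import Mathlib

/-- Stable range 1: `aR + bR = R` implies `(a + bt)R = R` for some `t`. -/
def StableRange1 (R : Type*) [CommRing R] : Prop :=
  ∀ a b : R, Ideal.span {a, b} = ⊤ → ∃ t : R, Ideal.span {a + b * t} = ⊤

/-- An elementary divisor ring: every matrix is equivalent to a diagonal matrix
with each diagonal entry dividing the next. -/
def ElementaryDivisorRing (R : Type*) [CommRing R] : Prop :=
  ∀ (n m : ℕ) (A : Matrix (Fin n) (Fin m) R),
    ∃ (P : Matrix (Fin n) (Fin n) R) (Q : Matrix (Fin m) (Fin m) R),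
      IsUnit P ∧ IsUnit Q ∧
      (∀ (i : Fin n) (j : Fin m), (i : ℕ) ≠ (j : ℕ) → (P * A * Q) i j = 0) ∧
      (∀ (i : Fin n) (j : Fin m) (i' : Fin n) (j' : Fin m), (i : ℕ) = (j : ℕ) → (i' : ℕ) = (j' : ℕ) →
        (i' : ℕ) = (i : ℕ) + 1 → (P * A * Q) i j ∣ (P * A * Q) i' j')

namespace EDRproof

variable {R : Type*} [CommRing R]


lemma sr1_unit (h : StableRange1 R) {a b : R} (hab : Ideal.span {a, b} = ⊤) :
    ∃ t : R, IsUnit (a + b * t) := by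
  obtain ⟨t, ht⟩ := h a b hab
  exact ⟨t, Ideal.span_singleton_eq_top.mp ht⟩

lemma exists_gen [IsBezout R] (s : Set R) (hs : s.Finite) :
    ∃ d : R, Ideal.span s = Ideal.span {d} := by
  have : (Ideal.span s).IsPrincipal :=
    IsBezout.isPrincipal_of_FG _ (Submodule.fg_span hs)
  obtain ⟨d, hd⟩ := this
  exact ⟨d, hd⟩

lemma pair_gcd (h : StableRange1 R) {a b d : R} (hd : Ideal.span {a, b} = Ideal.span {d}) :
    ∃ t u : R, IsUnit u ∧ a + b * t = d * u := by
  have ha : d ∣ a := by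
    rw [← Ideal.mem_span_singleton, ← hd]; exact Ideal.subset_span (by simp)
  have hb : d ∣ b := by
    rw [← Ideal.mem_span_singleton, ← hd]; exact Ideal.subset_span (by simp)
  obtain ⟨a', ha'⟩ := ha
  obtain ⟨b', hb'⟩ := hb
  have hdm : d ∈ Ideal.span {a, b} := hd ▸ Ideal.mem_span_singleton_self d
  obtain ⟨x, y, hxy⟩ := Ideal.mem_span_pair.mp hdm
  set z := 1 - (x * a' + y * b') with hz
  have hdz : d * z = 0 := by
    rw [hz]; linear_combination -hxy + x * ha' + y * hb'
  have hp : Ideal.span {a', b' * y + z} = ⊤ := by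
    rw [Ideal.eq_top_iff_one, Ideal.mem_span_pair]
    exact ⟨x, 1, by rw [hz]; ring⟩
  obtain ⟨t, hu⟩ := sr1_unit h hp
  exact ⟨y * t, a' + (b' * y + z) * t, hu, by linear_combination ha' + (y*t) * hb' - t * hdz⟩

lemma combo [IsBezout R] (h : StableRange1 R) :
    ∀ (n : ℕ) (b : Fin (n+1) → R),
    ∃ (t : Fin (n+1) → R) (β u : R), t 0 = 1 ∧ IsUnit u ∧
      Ideal.span (Set.range b) = Ideal.span {β} ∧ (∑ i, t i * b i) = β * u := by
  intro n
  induction n with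
  | zero =>
    intro b
    refine ⟨fun _ => 1, b 0, 1, rfl, isUnit_one, ?_, by simp⟩
    have : Set.range b = {b 0} := by
      ext x; constructor
      · rintro ⟨i, rfl⟩; rw [Fin.eq_zero i]; simp
      · rintro rfl; exact ⟨0, rfl⟩
    rw [this]
  | succ n ih =>
    intro b
    obtain ⟨t', β', u', ht'0, hu', hsp', hsum'⟩ := ih (Fin.tail b)
    obtain ⟨d, hd⟩ := exists_gen {b 0, β' * u'} (Set.toFinite _)
    obtain ⟨s, u, hu, heq⟩ := pair_gcd h hd
    refine ⟨Fin.cons 1 (fun i => s * t' i), d, u, by simp, hu, ?_, ?_⟩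
    · rw [Fin.range_fin_succ, Ideal.span_insert, hsp', ← hd,
        show ({b 0, β' * u'} : Set R) = insert (b 0) {β' * u'} from rfl,
        Ideal.span_insert, Ideal.span_singleton_mul_right_unit hu']
    · rw [Fin.sum_univ_succ]
      simp only [Fin.cons_zero, Fin.cons_succ, one_mul]
      have : ∑ i : Fin (n+1), s * t' i * b i.succ = s * (β' * u') := by
        rw [← hsum', Finset.mul_sum]
        exact Finset.sum_congr rfl fun i _ => by rw [Fin.tail]; ring
      rw [this]; linear_combination heq

lemma star (h : StableRange1 R) {β c0 γ : R} {J : Ideal R}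
    (p q r j : R) (hj : j ∈ J) (hcomb : p*β + q*c0 + r*γ + j = 1) :
    ∃ x e f j', j' ∈ J ∧ e*(β + x*c0) + f*(x*γ) + j' = 1 := by
  have hp1 : Ideal.span {c0, p*β + r*γ + j} = ⊤ := by
    rw [Ideal.eq_top_iff_one, Ideal.mem_span_pair]
    exact ⟨q, 1, by linear_combination hcomb⟩
  obtain ⟨t, hv⟩ := sr1_unit h hp1
  obtain ⟨v', hv'⟩ := hv.exists_left_inv
  have hp2 : Ideal.span {β, (c0 + (t*r)*γ) + t*j} = ⊤ := by
    rw [Ideal.eq_top_iff_one, Ideal.mem_span_pair]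
    exact ⟨v' * (t*p), v', by linear_combination hv'⟩
  obtain ⟨x, hu2⟩ := sr1_unit h hp2
  obtain ⟨w, hw⟩ := hu2.exists_left_inv
  exact ⟨x, w, w*(t*r), (w*(x*t))*j, J.mul_mem_left _ hj, by linear_combination hw⟩

open Matrix

def entSpan {n m : ℕ} (A : Matrix (Fin n) (Fin m) R) : Ideal R :=
  Ideal.span (Set.range fun p : Fin n × Fin m => A p.1 p.2)

lemma mem_entSpan {n m : ℕ} (A : Matrix (Fin n) (Fin m) R) (i : Fin n) (j : Fin m) :
    A i j ∈ entSpan A :=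
  Ideal.subset_span ⟨(i,j), rfl⟩

lemma entSpan_mul_left {n' n m : ℕ} (M : Matrix (Fin n') (Fin n) R)
    (A : Matrix (Fin n) (Fin m) R) : entSpan (M * A) ≤ entSpan A := by
  rw [entSpan, Ideal.span_le]
  rintro x ⟨⟨i,j⟩, rfl⟩
  simp only [Matrix.mul_apply]
  exact Ideal.sum_mem _ fun k _ => Ideal.mul_mem_left _ _ (mem_entSpan A k j)

lemma entSpan_mul_right {n m m' : ℕ} (A : Matrix (Fin n) (Fin m) R)
    (M : Matrix (Fin m) (Fin m') R) : entSpan (A * M) ≤ entSpan A := by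
  rw [entSpan, Ideal.span_le]
  rintro x ⟨⟨i,j⟩, rfl⟩
  simp only [Matrix.mul_apply]
  exact Ideal.sum_mem _ fun k _ => Ideal.mul_mem_right _ _ (mem_entSpan A i k)

lemma span_range_mulVec_le {n' n : ℕ} (M : Matrix (Fin n') (Fin n) R) (v : Fin n → R) :
    Ideal.span (Set.range (M.mulVec v)) ≤ Ideal.span (Set.range v) := by
  rw [Ideal.span_le]
  rintro x ⟨i, rfl⟩
  simp only [Matrix.mulVec, dotProduct]
  exact Ideal.sum_mem _ fun k _ => Ideal.mul_mem_left _ _ (Ideal.subset_span ⟨k, rfl⟩)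

lemma inv_pair_of_sq_zero {n : ℕ} (N : Matrix (Fin n) (Fin n) R) (hN : N * N = 0) :
    (1 + N) * (1 - N) = 1 ∧ (1 - N) * (1 + N) = 1 := by
  constructor <;>
    · simp only [mul_sub, sub_mul, add_mul, mul_add, mul_one, one_mul, hN]
      abel

def rowMat {n : ℕ} (t : Fin (n+1) → R) : Matrix (Fin (n+1)) (Fin (n+1)) R :=
  Matrix.of fun i j => if i = 0 ∧ j ≠ 0 then t j else 0

def colMat {n : ℕ} (c : Fin n → R) : Matrix (Fin (n+1)) (Fin (n+1)) R :=
  Matrix.of fun i j => Fin.cases 0 (fun i' => if j = 0 then c i' else 0) i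

lemma rowMat_sq {n : ℕ} (t : Fin (n+1) → R) : rowMat t * rowMat t = 0 := by
  ext i j
  simp only [Matrix.mul_apply, rowMat, Matrix.of_apply, Matrix.zero_apply]
  apply Finset.sum_eq_zero; intro k _
  by_cases hk : k = 0 <;> simp [hk]

lemma colMat_sq {n : ℕ} (c : Fin n → R) : colMat c * colMat c = 0 := by
  ext i j
  simp only [Matrix.mul_apply, colMat, Matrix.of_apply, Matrix.zero_apply]
  apply Finset.sum_eq_zero; intro k _
  refine Fin.cases ?_ (fun k' => ?_) k
  · refine Fin.cases ?_ (fun i' => ?_) i <;> simp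
  · refine Fin.cases ?_ (fun i' => ?_) i <;> simp [Fin.succ_ne_zero]

lemma rowMat_mulVec {n : ℕ} (t : Fin (n+1) → R) (b : Fin (n+1) → R) :
    (rowMat t).mulVec b = Fin.cons (∑ j : Fin n, t j.succ * b j.succ) 0 := by
  funext i
  refine Fin.cases ?_ (fun i' => ?_) i
  · simp only [Matrix.mulVec, dotProduct, rowMat, Matrix.of_apply, Fin.cons_zero]
    rw [Fin.sum_univ_succ]
    simp [Fin.succ_ne_zero]
  · simp [Matrix.mulVec, dotProduct, rowMat, Fin.succ_ne_zero]

lemma colMat_mulVec {n : ℕ} (c : Fin n → R) (v : Fin (n+1) → R) :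
    (colMat c).mulVec v = Fin.cons 0 (fun i' => c i' * v 0) := by
  funext i
  refine Fin.cases ?_ (fun i' => ?_) i
  · simp [Matrix.mulVec, dotProduct, colMat]
  · simp only [Matrix.mulVec, dotProduct, colMat, Matrix.of_apply, Fin.cons_succ,
      Fin.cases_succ]
    rw [Fin.sum_univ_succ]
    simp [Fin.succ_ne_zero]

def unitOfSqZero {k : ℕ} (N : Matrix (Fin k) (Fin k) R) (hN : N * N = 0) :
    (Matrix (Fin k) (Fin k) R)ˣ :=
  ⟨1 + N, 1 - N, (inv_pair_of_sq_zero N hN).1, (inv_pair_of_sq_zero N hN).2⟩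

lemma hermite [IsBezout R] (h : StableRange1 R) (n : ℕ) (b : Fin (n+1) → R) :
    ∃ (U : (Matrix (Fin (n+1)) (Fin (n+1)) R)ˣ) (β : R),
      Ideal.span (Set.range b) = Ideal.span {β} ∧
      (U : Matrix (Fin (n+1)) (Fin (n+1)) R).mulVec b = Fin.cons β (0 : Fin n → R) := by
  obtain ⟨t, β, u, ht0, hu, hsp, hsum⟩ := combo h n b
  set uu := hu.unit with huu
  have hu1 : (↑uu⁻¹ : R) * u = 1 := by
    have := uu.inv_mul; rwa [huu] at this
  have hdvd : ∀ i : Fin n, β ∣ b i.succ := fun i =>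
    Ideal.mem_span_singleton.mp (hsp ▸ Ideal.subset_span ⟨i.succ, rfl⟩)
  choose q hq using hdvd
  set U1 : (Matrix (Fin (n+1)) (Fin (n+1)) R)ˣ := unitOfSqZero (rowMat t) (rowMat_sq t)
  set U2 : (Matrix (Fin (n+1)) (Fin (n+1)) R)ˣ :=
    unitOfSqZero (colMat fun i => -((↑uu⁻¹ : R) * q i)) (colMat_sq _)
  set U3 : (Matrix (Fin (n+1)) (Fin (n+1)) R)ˣ :=
    ⟨Matrix.diagonal (fun i => if i = 0 then (↑uu⁻¹ : R) else 1),
     Matrix.diagonal (fun i => if i = 0 then u else 1),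
     by
      rw [Matrix.diagonal_mul_diagonal]
      ext i j
      by_cases hij : i = j
      · subst hij
        rw [Matrix.diagonal_apply_eq, Matrix.one_apply_eq]
        by_cases hi : i = 0
        · simp only [hi, if_pos]; exact hu1
        · simp [hi]
      · rw [Matrix.diagonal_apply_ne _ hij, Matrix.one_apply_ne hij],
     by
      rw [Matrix.diagonal_mul_diagonal]
      ext i j
      by_cases hij : i = j
      · subst hij
        rw [Matrix.diagonal_apply_eq, Matrix.one_apply_eq]
        by_cases hi : i = 0
        · simp only [hi, if_pos]; rw [mul_comm]; exact hu1
        · simp [hi]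
      · rw [Matrix.diagonal_apply_ne _ hij, Matrix.one_apply_ne hij]⟩
  refine ⟨U3 * U2 * U1, β, hsp, ?_⟩
  have w1 : (U1 : Matrix (Fin (n+1)) (Fin (n+1)) R).mulVec b = Fin.cons (β * u) (Fin.tail b) := by
    show ((1 + rowMat t).mulVec b) = _
    rw [Matrix.add_mulVec, Matrix.one_mulVec, rowMat_mulVec]
    funext i
    refine Fin.cases ?_ (fun i' => ?_) i
    · simp only [Pi.add_apply, Fin.cons_zero]
      rw [← hsum, Fin.sum_univ_succ, ht0, one_mul]
    · simp [Fin.tail]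
  have w2 : (U2 : Matrix (Fin (n+1)) (Fin (n+1)) R).mulVec (Fin.cons (β * u) (Fin.tail b)) =
      Fin.cons (β * u) (0 : Fin n → R) := by
    show ((1 + colMat (fun i => -((↑uu⁻¹ : R) * q i)) : Matrix (Fin (n+1)) (Fin (n+1)) R).mulVec
      (Fin.cons (β * u) (Fin.tail b))) = _
    rw [Matrix.add_mulVec, Matrix.one_mulVec, colMat_mulVec]
    funext i
    refine Fin.cases ?_ (fun i' => ?_) i
    · simp
    · simp only [Pi.add_apply, Fin.cons_succ, Fin.cons_zero, Fin.tail, Pi.zero_apply]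
      rw [hq i']
      linear_combination (-(β * q i')) * hu1
  have w3 : (U3 : Matrix (Fin (n+1)) (Fin (n+1)) R).mulVec (Fin.cons (β * u) (0 : Fin n → R)) =
      Fin.cons β (0 : Fin n → R) := by
    funext i
    show (Matrix.diagonal _).mulVec _ i = _
    rw [Matrix.mulVec_diagonal]
    refine Fin.cases ?_ (fun i' => ?_) i
    · simp only [if_pos, Fin.cons_zero]; linear_combination β * hu1
    · simp [Fin.succ_ne_zero]
  rw [Units.val_mul, Units.val_mul, ← Matrix.mulVec_mulVec, ← Matrix.mulVec_mulVec, w1, w2, w3]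

def oneExt {k : ℕ} (Q : Matrix (Fin k) (Fin k) R) : Matrix (Fin (k+1)) (Fin (k+1)) R :=
  Matrix.of fun i j =>
    Fin.cases (Fin.cases (1:R) (fun _ => 0) j) (fun i' => Fin.cases 0 (fun j' => Q i' j') j) i

@[simp] lemma oneExt_zz {k : ℕ} (Q : Matrix (Fin k) (Fin k) R) : oneExt Q 0 0 = 1 := rfl
@[simp] lemma oneExt_zs {k : ℕ} (Q : Matrix (Fin k) (Fin k) R) (j : Fin k) :
    oneExt Q 0 j.succ = 0 := by simp [oneExt]
@[simp] lemma oneExt_sz {k : ℕ} (Q : Matrix (Fin k) (Fin k) R) (i : Fin k) :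
    oneExt Q i.succ 0 = 0 := by simp [oneExt]
@[simp] lemma oneExt_ss {k : ℕ} (Q : Matrix (Fin k) (Fin k) R) (i j : Fin k) :
    oneExt Q i.succ j.succ = Q i j := by simp [oneExt]

lemma oneExt_mul {k : ℕ} (Q1 Q2 : Matrix (Fin k) (Fin k) R) :
    oneExt Q1 * oneExt Q2 = oneExt (Q1 * Q2) := by
  ext i j
  rw [Matrix.mul_apply, Fin.sum_univ_succ]
  refine Fin.cases ?_ (fun i' => ?_) i <;> refine Fin.cases ?_ (fun j' => ?_) j <;>
    simp [Matrix.mul_apply]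

lemma oneExt_one {k : ℕ} : oneExt (1 : Matrix (Fin k) (Fin k) R) = 1 := by
  ext i j
  refine Fin.cases ?_ (fun i' => ?_) i <;> refine Fin.cases ?_ (fun j' => ?_) j <;>
    simp [Matrix.one_apply, Fin.succ_ne_zero, (Fin.succ_ne_zero _).symm, Fin.succ_inj]

def oneExtUnit {k : ℕ} (Q : (Matrix (Fin k) (Fin k) R)ˣ) : (Matrix (Fin (k+1)) (Fin (k+1)) R)ˣ :=
  ⟨oneExt Q, oneExt ↑Q⁻¹,
   by rw [oneExt_mul, Q.mul_inv, oneExt_one],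
   by rw [oneExt_mul, Q.inv_mul, oneExt_one]⟩


@[simp] lemma oneExtUnit_val {k : ℕ} (Q : (Matrix (Fin k) (Fin k) R)ˣ) :
    (oneExtUnit Q : Matrix (Fin (k+1)) (Fin (k+1)) R) = oneExt ↑Q := rfl

lemma entSpan_eq_col {n : ℕ} (A : Matrix (Fin (n+1)) (Fin 1) R) :
    entSpan A = Ideal.span (Set.range fun i => A i 0) := by
  apply le_antisymm <;> rw [entSpan, Ideal.span_le]
  · rintro x ⟨⟨i,j⟩, rfl⟩
    rw [Fin.eq_zero j]
    exact Ideal.subset_span ⟨i, rfl⟩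
  · rintro x ⟨i, rfl⟩
    exact Ideal.subset_span ⟨(i, 0), rfl⟩

lemma S1 [IsBezout R] (h : StableRange1 R) :
    ∀ (m n : ℕ) (A : Matrix (Fin (n+1)) (Fin (m+1)) R) (J : Ideal R),
      entSpan A ⊔ J = ⊤ →
      ∃ Q : (Matrix (Fin (m+1)) (Fin (m+1)) R)ˣ,
        Ideal.span (Set.range fun i => (A * (Q : Matrix (Fin (m+1)) (Fin (m+1)) R)) i 0) ⊔ J = ⊤ := by
  intro m
  induction m with
  | zero =>
    intro n A J hA
    refine ⟨1, ?_⟩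
    simp only [Units.val_one, Matrix.mul_one]
    rw [← entSpan_eq_col, hA]
  | succ m ih =>
    intro n A J hA
    obtain ⟨U, β, hspβ, hUb⟩ := hermite h n (fun i => A i 0)
    set B : Matrix (Fin (n+1)) (Fin (m+2)) R := (U : Matrix _ _ R) * A with hBdef
    have hBcol : ∀ i, B i 0 = (Fin.cons β (0 : Fin n → R) : Fin (n+1) → R) i := by
      intro i
      rw [← hUb]
      simp [hBdef, Matrix.mul_apply, Matrix.mulVec, dotProduct]
      rfl
    set C : Matrix (Fin (n+1)) (Fin (m+1)) R := B.submatrix id Fin.succ with hCdef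
    have hAB : A = ((U⁻¹ : (Matrix (Fin (n+1)) (Fin (n+1)) R)ˣ) : Matrix _ _ R) * B := by
      rw [hBdef]; erw [← Matrix.mul_assoc, U.inv_mul, Matrix.one_mul]
    have hBle : entSpan B ≤ entSpan C ⊔ Ideal.span {β} := by
      rw [entSpan, Ideal.span_le]
      rintro x ⟨⟨i,j⟩, rfl⟩
      show B i j ∈ _
      refine Fin.cases ?_ (fun j' => ?_) j
      · rw [hBcol i]
        refine Fin.cases ?_ (fun i' => ?_) i
        · exact Ideal.mem_sup_right (Ideal.subset_span rfl)
        · simp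
      · exact Ideal.mem_sup_left (mem_entSpan C i j')
    have hCJ : entSpan C ⊔ (J ⊔ Ideal.span {β}) = ⊤ := by
      rw [eq_top_iff, ← hA]
      refine sup_le ?_ (le_sup_of_le_right le_sup_left)
      have h1 : entSpan A ≤ entSpan C ⊔ Ideal.span {β} :=
        le_trans (by rw [hAB]; exact entSpan_mul_left _ _) hBle
      exact le_trans h1 (sup_le le_sup_left (le_sup_of_le_right le_sup_right))
    obtain ⟨Q1, hQ1⟩ := ih n C (J ⊔ Ideal.span {β}) hCJ
    set c : Fin (n+1) → R := fun i => (C * (Q1 : Matrix (Fin (m+1)) (Fin (m+1)) R)) i 0 with hcdef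
    obtain ⟨γ, hγ⟩ := exists_gen (Set.range fun i' : Fin n => c i'.succ) (Set.finite_range _)
    -- decompose 1 into the star shape
    have h1 : (1 : R) ∈ Ideal.span (Set.range c) ⊔ (J ⊔ Ideal.span {β}) := hQ1 ▸ Submodule.mem_top
    obtain ⟨w1, hw1, w2, hw2, hsum12⟩ := Submodule.mem_sup.mp h1
    obtain ⟨j0, hj0, sβ, hsβ, hsum2⟩ := Submodule.mem_sup.mp hw2
    obtain ⟨s, hs⟩ := Ideal.mem_span_singleton'.mp hsβ
    obtain ⟨xc, hxc⟩ := (Submodule.mem_span_range_iff_exists_fun R).mp hw1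
    have htail : ∑ i' : Fin n, xc i'.succ * c i'.succ ∈ Ideal.span {γ} := by
      rw [← hγ]
      exact Ideal.sum_mem _ fun i' _ =>
        Ideal.mul_mem_left _ _ (Ideal.subset_span ⟨i', rfl⟩)
    obtain ⟨r, hr⟩ := Ideal.mem_span_singleton'.mp htail
    have hcomb : s * β + (xc 0) * c 0 + r * γ + j0 = 1 := by
      rw [hr]
      have hx : ∑ i, xc i • c i = w1 := hxc
      rw [← hsum12, ← hsum2]
      simp only [smul_eq_mul] at hx
      rw [← hx, Fin.sum_univ_succ]
      ring_nf
      rw [hs]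
      ring
    obtain ⟨x, e, f, j', hj', hstar⟩ := star h s (xc 0) r j0 hj0 hcomb
    -- assemble the final column transformation
    set N : Matrix (Fin (m+2)) (Fin (m+2)) R :=
      Matrix.of (fun l j => if l = 1 ∧ j = 0 then x else 0) with hNdef
    have hNsq : N * N = 0 := by
      ext i j
      simp only [Matrix.mul_apply, hNdef, Matrix.of_apply, Matrix.zero_apply]
      apply Finset.sum_eq_zero
      intro k _
      by_cases hk : k = 0
      · subst hk
        have : ¬((0 : Fin (m+2)) = 1 ∧ j = 0) := by
          rintro ⟨h01, -⟩
          exact absurd (congrArg Fin.val h01) (by simp)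
        simp [this]
      · simp [hk]
    set Qf : (Matrix (Fin (m+2)) (Fin (m+2)) R)ˣ := oneExtUnit Q1 * unitOfSqZero N hNsq with hQf
    refine ⟨Qf, ?_⟩
    have hQfval : (Qf : Matrix (Fin (m+2)) (Fin (m+2)) R) = oneExt (Q1 : Matrix _ _ R) * (1 + N) := rfl
    have h1N : ∀ (M : Matrix (Fin (n+1)) (Fin (m+2)) R) (i : Fin (n+1)),
        ((M * (1 + N) : Matrix (Fin (n+1)) (Fin (m+2)) R)) i 0 = M i 0 + x * M i 1 := by
      intro M i
      rw [Matrix.mul_apply]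
      simp only [Matrix.add_apply, Matrix.one_apply, hNdef, Matrix.of_apply, mul_add,
        and_true, eq_self_iff_true]
      rw [Finset.sum_add_distrib]
      congr 1
      · simp
      · simp only [mul_ite, mul_zero, mul_comm]
        simp
    have hM1 : ∀ i, ((B * oneExt (Q1 : Matrix (Fin (m+1)) (Fin (m+1)) R) : Matrix (Fin (n+1)) (Fin (m+2)) R)) i 0 = B i 0 := by
      intro i
      rw [Matrix.mul_apply, Fin.sum_univ_succ]
      simp
    have hM2 : ∀ i, ((B * oneExt (Q1 : Matrix (Fin (m+1)) (Fin (m+1)) R) : Matrix (Fin (n+1)) (Fin (m+2)) R)) i 1 = c i := by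
      intro i
      have h10 : (1 : Fin (m+2)) = Fin.succ 0 := by
        rw [Fin.succ_zero_eq_one]
      rw [Matrix.mul_apply, h10, Fin.sum_univ_succ]
      simp only [oneExt_zs, mul_zero, zero_add, oneExt_ss]
      have hci : c i = (C * (Q1 : Matrix (Fin (m+1)) (Fin (m+1)) R)) i 0 := rfl
      rw [hci, Matrix.mul_apply]
      rfl
    have hBQf : ∀ i, (B * (Qf : Matrix (Fin (m+2)) (Fin (m+2)) R)) i 0
        = (Fin.cons β (0:Fin n → R) : Fin (n+1) → R) i + x * c i := by
      intro i
      rw [hQfval, ← Matrix.mul_assoc, h1N, hM1, hM2, hBcol]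
    have hABQf : (fun i => (B * (Qf : Matrix (Fin (m+2)) (Fin (m+2)) R)) i 0)
        = (U : Matrix (Fin (n+1)) (Fin (n+1)) R).mulVec
            (fun i => (A * (Qf : Matrix (Fin (m+2)) (Fin (m+2)) R)) i 0) := by
      funext i
      rw [hBdef]; erw [Matrix.mul_assoc]
      simp [Matrix.mul_apply, Matrix.mulVec, dotProduct]
    have hle : Ideal.span (Set.range fun i => (B * (Qf : Matrix (Fin (m+2)) (Fin (m+2)) R)) i 0)
        ≤ Ideal.span (Set.range fun i => (A * (Qf : Matrix (Fin (m+2)) (Fin (m+2)) R)) i 0) := by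
      rw [hABQf]
      exact span_range_mulVec_le _ _
    rw [Ideal.eq_top_iff_one, ← hstar]
    refine Submodule.add_mem _ (Submodule.add_mem _ ?_ ?_) (Ideal.mem_sup_right hj')
    · refine Ideal.mem_sup_left (Ideal.mul_mem_left _ _ (hle ?_))
      have : β + x * c 0 = (B * (Qf : Matrix (Fin (m+2)) (Fin (m+2)) R)) 0 0 := by
        rw [hBQf 0]; simp
      rw [this]
      exact Ideal.subset_span ⟨0, rfl⟩
    · refine Ideal.mem_sup_left (Ideal.mul_mem_left _ _ (hle ?_))
      have hγmem : γ ∈ Ideal.span (Set.range fun i' : Fin n => c i'.succ) := by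
        rw [hγ]; exact Ideal.mem_span_singleton_self γ
      obtain ⟨y, hy⟩ := (Submodule.mem_span_range_iff_exists_fun R).mp hγmem
      have hxγ : x * γ = ∑ i' : Fin n,
          y i' * ((B * (Qf : Matrix (Fin (m+2)) (Fin (m+2)) R)) i'.succ 0) := by
        rw [← hy, Finset.mul_sum]
        refine Finset.sum_congr rfl fun i' _ => ?_
        rw [hBQf i'.succ]
        simp only [Fin.cons_succ, Pi.zero_apply, zero_add, smul_eq_mul]
        ring
      rw [hxγ]
      exact Ideal.sum_mem _ fun i' _ =>
        Ideal.mul_mem_left _ _ (Ideal.subset_span ⟨i'.succ, rfl⟩)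

lemma dvd_mul_mul {n n' m m' : ℕ} (P : Matrix (Fin n') (Fin n) R) (B : Matrix (Fin n) (Fin m) R)
    (Q : Matrix (Fin m) (Fin m') R) (r : R) (hr : ∀ i j, r ∣ B i j) :
    ∀ i j, r ∣ (P * B * Q) i j := by
  intro i j
  rw [Matrix.mul_apply]
  refine Finset.dvd_sum fun l _ => ?_
  rw [Matrix.mul_apply, Finset.sum_mul]
  refine Finset.dvd_sum fun k _ => ?_
  exact ((hr k l).mul_left (P i k)).mul_right (Q l j)

lemma entSpan_eq_row {k : ℕ} (A : Matrix (Fin 1) (Fin (k+1)) R) :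
    entSpan A = Ideal.span (Set.range fun j => A 0 j) := by
  apply le_antisymm <;> rw [entSpan, Ideal.span_le]
  · rintro x ⟨⟨i,j⟩, rfl⟩
    rw [Fin.eq_zero i]
    exact Ideal.subset_span ⟨j, rfl⟩
  · rintro x ⟨j, rfl⟩
    exact Ideal.subset_span ⟨(0, j), rfl⟩

lemma corner [IsBezout R] (h : StableRange1 R) (n m : ℕ)
    (A : Matrix (Fin (n+1)) (Fin (m+1)) R) :
    ∃ (P : (Matrix (Fin (n+1)) (Fin (n+1)) R)ˣ) (Q : (Matrix (Fin (m+1)) (Fin (m+1)) R)ˣ),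
      ∀ i j, ((P : Matrix (Fin (n+1)) (Fin (n+1)) R) * A *
        (Q : Matrix (Fin (m+1)) (Fin (m+1)) R)) 0 0 ∣ A i j := by
  obtain ⟨d, hd⟩ := exists_gen
    (Set.range fun p : Fin (n+1) × Fin (m+1) => A p.1 p.2) (Set.finite_range _)
  have hdall : ∀ i j, d ∣ A i j := fun i j =>
    Ideal.mem_span_singleton.mp (hd ▸ mem_entSpan A i j)
  have hdall' : ∀ p : Fin (n+1) × Fin (m+1), d ∣ A p.1 p.2 := fun p => hdall p.1 p.2
  choose A'f hA' using hdall'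
  set A' : Matrix (Fin (n+1)) (Fin (m+1)) R := Matrix.of fun i j => A'f (i, j) with hA'def
  have hAij : ∀ i j, A i j = d * A' i j := fun i j => hA' (i, j)
  have hdmem : d ∈ entSpan A := by
    rw [entSpan, hd]; exact Ideal.mem_span_singleton_self d
  obtain ⟨cp, hcp⟩ := (Submodule.mem_span_range_iff_exists_fun R).mp hdmem
  set z : R := 1 - ∑ p : Fin (n+1) × Fin (m+1), cp p * A' p.1 p.2 with hzdef
  have hdz : d * z = 0 := by
    have e1 : d * ∑ p : Fin (n+1) × Fin (m+1), cp p * A' p.1 p.2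
        = ∑ p : Fin (n+1) × Fin (m+1), cp p * A p.1 p.2 := by
      rw [Finset.mul_sum]
      exact Finset.sum_congr rfl fun p _ => by rw [hAij p.1 p.2]; ring
    have e2 : ∑ p : Fin (n+1) × Fin (m+1), cp p * A p.1 p.2 = d := by
      simpa only [smul_eq_mul] using hcp
    rw [hzdef, mul_sub, mul_one, e1, e2, sub_self]
  have hA'J : entSpan A' ⊔ Ideal.span {z} = ⊤ := by
    rw [Ideal.eq_top_iff_one]
    have : (1 : R) = (∑ p : Fin (n+1) × Fin (m+1), cp p * A' p.1 p.2) + z := by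
      rw [hzdef]; ring
    rw [this]
    refine Submodule.add_mem _ (Ideal.mem_sup_left ?_) (Ideal.mem_sup_right ?_)
    · exact Ideal.sum_mem _ fun p _ => Ideal.mul_mem_left _ _ (mem_entSpan A' p.1 p.2)
    · exact Ideal.subset_span rfl
  obtain ⟨Q, hQ⟩ := S1 h m n A' (Ideal.span {z}) hA'J
  set Arow : Matrix (Fin 1) (Fin (n+1)) R :=
    Matrix.of fun _ i => (A' * (Q : Matrix (Fin (m+1)) (Fin (m+1)) R)) i 0 with hArow
  have hrowJ : entSpan Arow ⊔ Ideal.span {z} = ⊤ := by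
    rw [entSpan_eq_row]
    exact hQ
  obtain ⟨Q2, hQ2⟩ := S1 h n 0 Arow (Ideal.span {z}) hrowJ
  set g : R := (Arow * (Q2 : Matrix (Fin (n+1)) (Fin (n+1)) R)) 0 0 with hgdef
  have hspg : Ideal.span (Set.range fun i0 : Fin 1 =>
      (Arow * (Q2 : Matrix (Fin (n+1)) (Fin (n+1)) R)) i0 0) = Ideal.span {g} := by
    congr 1
    ext y; constructor
    · rintro ⟨i0, rfl⟩; rw [Fin.eq_zero i0]; rfl
    · rintro rfl; exact ⟨0, rfl⟩
  have hgz : Ideal.span {g, z} = ⊤ := by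
    have : Ideal.span ({g, z} : Set R) = Ideal.span {g} ⊔ Ideal.span {z} := by
      rw [show ({g, z} : Set R) = insert g {z} from rfl, Ideal.span_insert]
    rw [this, ← hspg]
    exact hQ2
  obtain ⟨τ, huτ⟩ := sr1_unit h hgz
  obtain ⟨w, hw⟩ := huτ.exists_left_inv
  set P : (Matrix (Fin (n+1)) (Fin (n+1)) R)ˣ :=
    ⟨(Q2 : Matrix (Fin (n+1)) (Fin (n+1)) R)ᵀ, ((Q2⁻¹ : _) : Matrix (Fin (n+1)) (Fin (n+1)) R)ᵀ,
     by rw [← Matrix.transpose_mul, Q2.inv_mul, Matrix.transpose_one],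
     by rw [← Matrix.transpose_mul, Q2.mul_inv, Matrix.transpose_one]⟩ with hPdef
  refine ⟨P, Q, ?_⟩
  intro i j
  -- corner value equals d * g
  have hPA'Q : ((P : Matrix (Fin (n+1)) (Fin (n+1)) R) * A' *
      (Q : Matrix (Fin (m+1)) (Fin (m+1)) R)) 0 0 = g := by
    rw [Matrix.mul_assoc, Matrix.mul_apply]
    rw [hgdef, Matrix.mul_apply]
    refine Finset.sum_congr rfl fun k _ => ?_
    rw [mul_comm]
    rfl
  have hcorner : ((P : Matrix (Fin (n+1)) (Fin (n+1)) R) * A *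
      (Q : Matrix (Fin (m+1)) (Fin (m+1)) R)) 0 0 = d * g := by
    rw [← hPA'Q, Matrix.mul_assoc, Matrix.mul_assoc, Matrix.mul_apply, Matrix.mul_apply,
      Finset.mul_sum]
    refine Finset.sum_congr rfl fun k _ => ?_
    rw [Matrix.mul_apply, Matrix.mul_apply, Finset.mul_sum, Finset.mul_sum, Finset.mul_sum]
    refine Finset.sum_congr rfl fun l _ => ?_
    rw [hAij k l]
    ring
  rw [hcorner]
  -- d * g divides d
  have hdg_d : d * g ∣ d := by
    refine ⟨w, ?_⟩
    have h2 : d * (g + z * τ) = d * g := by linear_combination τ * hdz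
    calc d = d * ((g + z * τ) * w) := by rw [mul_comm (g + z*τ) w, hw, mul_one]
      _ = d * (g + z * τ) * w := by ring
      _ = d * g * w := by rw [h2]
  exact dvd_trans hdg_d (hdall i j)

lemma mul_transpose_colMat {n m : ℕ} (M : Matrix (Fin (n+1)) (Fin (m+1)) R) (c : Fin m → R)
    (i : Fin (n+1)) (j : Fin (m+1)) :
    (M * (colMat c)ᵀ : Matrix (Fin (n+1)) (Fin (m+1)) R) i j
      = Fin.cases 0 (fun j' => M i 0 * c j') j := by
  rw [Matrix.mul_apply]
  refine Fin.cases ?_ (fun j' => ?_) j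
  · apply Finset.sum_eq_zero
    intro k _
    simp [colMat]
  · rw [Fin.sum_univ_succ]
    simp [colMat, Fin.succ_ne_zero]

lemma colMat_mul {n m : ℕ} (c : Fin n → R) (M : Matrix (Fin (n+1)) (Fin (m+1)) R)
    (i : Fin (n+1)) (j : Fin (m+1)) :
    (colMat c * M : Matrix (Fin (n+1)) (Fin (m+1)) R) i j
      = Fin.cases 0 (fun i' => c i' * M 0 j) i := by
  rw [Matrix.mul_apply]
  refine Fin.cases ?_ (fun i' => ?_) i
  · apply Finset.sum_eq_zero
    intro k _
    simp [colMat]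
  · rw [Fin.sum_univ_succ]
    simp [colMat, Fin.succ_ne_zero]

lemma colMat_T_sq {m : ℕ} (c : Fin m → R) :
    ((colMat c)ᵀ : Matrix (Fin (m+1)) (Fin (m+1)) R) * (colMat c)ᵀ = 0 := by
  rw [← Matrix.transpose_mul, colMat_sq, Matrix.transpose_zero]

lemma clear (n m : ℕ) (B : Matrix (Fin (n+1)) (Fin (m+1)) R)
    (hdvd : ∀ i j, B 0 0 ∣ B i j) :
    ∃ (P : (Matrix (Fin (n+1)) (Fin (n+1)) R)ˣ) (Q : (Matrix (Fin (m+1)) (Fin (m+1)) R)ˣ),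
      ((P : Matrix (Fin (n+1)) (Fin (n+1)) R) * B * (Q : Matrix (Fin (m+1)) (Fin (m+1)) R)) 0 0
        = B 0 0 ∧
      (∀ j' : Fin m, ((P : Matrix (Fin (n+1)) (Fin (n+1)) R) * B *
        (Q : Matrix (Fin (m+1)) (Fin (m+1)) R)) 0 j'.succ = 0) ∧
      (∀ i' : Fin n, ((P : Matrix (Fin (n+1)) (Fin (n+1)) R) * B *
        (Q : Matrix (Fin (m+1)) (Fin (m+1)) R)) i'.succ 0 = 0) := by
  have hq : ∀ j' : Fin m, B 0 0 ∣ B 0 j'.succ := fun j' => hdvd 0 j'.succ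
  choose q hq' using hq
  have hr : ∀ i' : Fin n, B 0 0 ∣ B i'.succ 0 := fun i' => hdvd i'.succ 0
  choose rr hr' using hr
  set Qu : (Matrix (Fin (m+1)) (Fin (m+1)) R)ˣ :=
    unitOfSqZero ((colMat (fun j' => -(q j')))ᵀ) (colMat_T_sq _) with hQu
  set Pu : (Matrix (Fin (n+1)) (Fin (n+1)) R)ˣ :=
    unitOfSqZero (colMat (fun i' => -(rr i'))) (colMat_sq _) with hPu
  set B2 : Matrix (Fin (n+1)) (Fin (m+1)) R :=
    B * (1 + (colMat (fun j' => -(q j')))ᵀ) with hB2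
  have hB2e : ∀ i j, B2 i j = B i j +
      (Fin.cases 0 (fun j' => B i 0 * (-(q j'))) j : R) := by
    intro i j
    rw [hB2, Matrix.mul_add, Matrix.mul_one, Matrix.add_apply, mul_transpose_colMat]
  have hB2_00 : B2 0 0 = B 0 0 := by rw [hB2e]; simp
  have hB2_col : ∀ i, B2 i 0 = B i 0 := fun i => by rw [hB2e]; simp
  have hB2_row : ∀ j' : Fin m, B2 0 j'.succ = 0 := by
    intro j'
    rw [hB2e]
    simp only [Fin.cases_succ]
    rw [hq' j']
    ring
  set C : Matrix (Fin (n+1)) (Fin (m+1)) R :=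
    (1 + colMat (fun i' => -(rr i'))) * B2 with hC
  have hCe : ∀ i j, C i j = B2 i j +
      (Fin.cases 0 (fun i' => -(rr i') * B2 0 j) i : R) := by
    intro i j
    rw [hC, Matrix.add_mul, Matrix.one_mul, Matrix.add_apply, colMat_mul]
  have hCPBQ : C = (Pu : Matrix (Fin (n+1)) (Fin (n+1)) R) * B *
      (Qu : Matrix (Fin (m+1)) (Fin (m+1)) R) := by
    rw [hC, hB2, hQu, hPu]
    show _ = (1 + colMat fun i' => -rr i') * B * (1 + (colMat fun j' => -q j')ᵀ)
    rw [Matrix.mul_assoc]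
  refine ⟨Pu, Qu, ?_, ?_, ?_⟩
  · rw [← hCPBQ, hCe]
    simp only [Fin.cases_zero]
    rw [hB2_00]
    ring
  · intro j'
    rw [← hCPBQ, hCe]
    simp only [Fin.cases_zero]
    rw [hB2_row j']
    ring
  · intro i'
    rw [← hCPBQ, hCe]
    simp only [Fin.cases_succ]
    rw [hB2_col, hB2_00, hr' i']
    ring

section Conj
variable {n m : ℕ} (P : Matrix (Fin n) (Fin n) R) (B : Matrix (Fin (n+1)) (Fin (m+1)) R)
  (Q : Matrix (Fin m) (Fin m) R)

lemma oneExt_row0 (j : Fin (m+1)) :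
    ((oneExt P * B : Matrix (Fin (n+1)) (Fin (m+1)) R)) 0 j = B 0 j := by
  rw [Matrix.mul_apply, Fin.sum_univ_succ]
  simp

lemma oneExt_rows (i' : Fin n) (j : Fin (m+1)) :
    ((oneExt P * B : Matrix (Fin (n+1)) (Fin (m+1)) R)) i'.succ j
      = ∑ k' : Fin n, P i' k' * B k'.succ j := by
  rw [Matrix.mul_apply, Fin.sum_univ_succ]
  simp

lemma oneExt_col0 (M : Matrix (Fin (n+1)) (Fin (m+1)) R) (i : Fin (n+1)) :
    ((M * oneExt Q : Matrix (Fin (n+1)) (Fin (m+1)) R)) i 0 = M i 0 := by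
  rw [Matrix.mul_apply, Fin.sum_univ_succ]
  simp

lemma oneExt_cols (M : Matrix (Fin (n+1)) (Fin (m+1)) R) (i : Fin (n+1)) (j' : Fin m) :
    ((M * oneExt Q : Matrix (Fin (n+1)) (Fin (m+1)) R)) i j'.succ
      = ∑ l' : Fin m, M i l'.succ * Q l' j' := by
  rw [Matrix.mul_apply, Fin.sum_univ_succ]
  simp

lemma conj_zz : (oneExt P * B * oneExt Q) 0 0 = B 0 0 := by
  rw [oneExt_col0, oneExt_row0]

lemma conj_zs (j' : Fin m) :
    (oneExt P * B * oneExt Q) 0 j'.succ = ∑ l' : Fin m, B 0 l'.succ * Q l' j' := by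
  rw [oneExt_cols]
  exact Finset.sum_congr rfl fun l' _ => by rw [oneExt_row0]

lemma conj_sz (i' : Fin n) :
    (oneExt P * B * oneExt Q) i'.succ 0 = ∑ k' : Fin n, P i' k' * B k'.succ 0 := by
  rw [oneExt_col0, oneExt_rows]

lemma conj_ss (i' : Fin n) (j' : Fin m) :
    (oneExt P * B * oneExt Q) i'.succ j'.succ
      = (P * B.submatrix Fin.succ Fin.succ * Q) i' j' := by
  rw [oneExt_cols, Matrix.mul_apply]
  refine Finset.sum_congr rfl fun l' _ => ?_
  rw [oneExt_rows, Matrix.mul_apply]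
  rfl

end Conj

lemma main [IsBezout R] (h : StableRange1 R) :
    ∀ (n m : ℕ) (A : Matrix (Fin n) (Fin m) R),
    ∃ (P : (Matrix (Fin n) (Fin n) R)ˣ) (Q : (Matrix (Fin m) (Fin m) R)ˣ),
      (∀ (i : Fin n) (j : Fin m), (i : ℕ) ≠ (j : ℕ) →
        ((P : Matrix (Fin n) (Fin n) R) * A * (Q : Matrix (Fin m) (Fin m) R)) i j = 0) ∧
      (∀ (i : Fin n) (j : Fin m) (i' : Fin n) (j' : Fin m),
        (i : ℕ) = (j : ℕ) → (i' : ℕ) = (j' : ℕ) → (i' : ℕ) = (i : ℕ) + 1 →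
        ((P : Matrix (Fin n) (Fin n) R) * A * (Q : Matrix (Fin m) (Fin m) R)) i j ∣
        ((P : Matrix (Fin n) (Fin n) R) * A * (Q : Matrix (Fin m) (Fin m) R)) i' j') := by
  intro n
  induction n with
  | zero =>
    intro m A
    exact ⟨1, 1, fun i _ _ => i.elim0, fun i _ _ _ _ _ _ => i.elim0⟩
  | succ n ihn =>
    intro m A
    match m with
    | 0 => exact ⟨1, 1, fun _ j _ => j.elim0, fun _ j _ _ _ _ _ => j.elim0⟩
    | m + 1 =>
      obtain ⟨P0, Q0, hP0⟩ := corner h n m A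
      set B : Matrix (Fin (n+1)) (Fin (m+1)) R :=
        (P0 : Matrix (Fin (n+1)) (Fin (n+1)) R) * A * (Q0 : Matrix (Fin (m+1)) (Fin (m+1)) R)
        with hBdef
      have hdvdB : ∀ i j, B 0 0 ∣ B i j := by
        intro i j
        rw [hBdef]
        exact dvd_mul_mul _ _ _ _ (fun i j => hP0 i j) i j
      obtain ⟨P1, Q1, hc00, hcrow, hccol⟩ := clear n m B hdvdB
      set C : Matrix (Fin (n+1)) (Fin (m+1)) R :=
        (P1 : Matrix (Fin (n+1)) (Fin (n+1)) R) * B * (Q1 : Matrix (Fin (m+1)) (Fin (m+1)) R)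
        with hCdef
      have hdvdC : ∀ i j, B 0 0 ∣ C i j := by
        intro i j
        rw [hCdef]
        exact dvd_mul_mul _ _ _ _ hdvdB i j
      obtain ⟨P', Q', hoff, hchain⟩ := ihn m (C.submatrix Fin.succ Fin.succ)
      refine ⟨oneExtUnit P' * (P1 * P0), (Q0 * Q1) * oneExtUnit Q', ?_, ?_⟩
      all_goals
        have hFeq : ((oneExtUnit P' * (P1 * P0) : (Matrix (Fin (n+1)) (Fin (n+1)) R)ˣ) :
            Matrix (Fin (n+1)) (Fin (n+1)) R) * A *
            (((Q0 * Q1) * oneExtUnit Q' : (Matrix (Fin (m+1)) (Fin (m+1)) R)ˣ) :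
            Matrix (Fin (m+1)) (Fin (m+1)) R)
            = oneExt (P' : Matrix (Fin n) (Fin n) R) * C *
              oneExt (Q' : Matrix (Fin m) (Fin m) R) := by
          rw [hCdef, hBdef]
          simp only [Units.val_mul, oneExtUnit_val, Matrix.mul_assoc]
      · -- off diagonal
        intro i j hij
        rw [hFeq]
        rcases Fin.eq_zero_or_eq_succ i with rfl | ⟨a, rfl⟩
        · rcases Fin.eq_zero_or_eq_succ j with rfl | ⟨b, rfl⟩
          · exact absurd rfl hij
          · rw [conj_zs]
            exact Finset.sum_eq_zero fun l' _ => by rw [hcrow l', zero_mul]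
        · rcases Fin.eq_zero_or_eq_succ j with rfl | ⟨b, rfl⟩
          · rw [conj_sz]
            exact Finset.sum_eq_zero fun k' _ => by rw [hccol k', mul_zero]
          · rw [conj_ss]
            refine hoff a b ?_
            simp only [Fin.val_succ] at hij
            omega
      · -- chain
        intro i j i' j' hij hij' hsucc
        rw [hFeq]
        rcases Fin.eq_zero_or_eq_succ i with rfl | ⟨a, rfl⟩
        · have hj : j = 0 := by
            ext
            simpa using hij.symm
          subst hj
          rw [conj_zz, hc00]
          have hdvdF : ∀ a b, B 0 0 ∣ (oneExt (P' : Matrix (Fin n) (Fin n) R) * C *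
              oneExt (Q' : Matrix (Fin m) (Fin m) R)) a b :=
            dvd_mul_mul _ _ _ _ hdvdC
          exact hdvdF i' j'
        · rcases Fin.eq_zero_or_eq_succ j with rfl | ⟨b, rfl⟩
          · simp only [Fin.val_succ, Fin.val_zero] at hij
            omega
          · rcases Fin.eq_zero_or_eq_succ i' with rfl | ⟨a', rfl⟩
            · simp only [Fin.val_succ, Fin.val_zero] at hsucc
              omega
            · rcases Fin.eq_zero_or_eq_succ j' with rfl | ⟨b', rfl⟩
              · simp only [Fin.val_succ, Fin.val_zero] at hij'
                omega
              · rw [conj_ss, conj_ss]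
                refine hchain a b a' b' ?_ ?_ ?_ <;>
                  simp only [Fin.val_succ] at hij hij' hsucc <;> omega


end EDRproof

theorem elementaryDivisorRing_of_bezout_stableRange1 (R : Type*) [CommRing R]
    [IsBezout R] (h : StableRange1 R) : ElementaryDivisorRing R := by
  intro n m A
  obtain ⟨P, Q, h1, h2⟩ := EDRproof.main h n m A
  exact ⟨↑P, ↑Q, P.isUnit, Q.isUnit, h1, h2⟩
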